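/- Fix a finite nonempty index set V, finite nonempty label type L, a region family 𝓡 with a region graph E, ε > 0, C ≥ 0, a finite training set S and finite feature index set K, with region losses ℓ_{s,r}, true region labels y_{s,r}, and region features φ_{k,r}(s,·) as data. The low-dimensional structured prediction objective J(w,λ) = ∑_{s∈S} ∑_{r∈𝓡} [ ε·log(∑_{z∈Y_r} exp(θ_{s,r}^λ(z;w)/ε)) − θ_{s,r}^λ(y_{s,r};w) ] + (C/2)∑_{k∈K} w_k², where θ_{s,r}(z;w) = ℓ_{s,r}(z) + ∑_k w_k φ_{k,r}(s,z) and θ_{s,r}^λ(z;w) = θ_{s,r}(z;w) + ∑_{c∈C(r)} λ_{s,c→r}(z|_c) − ∑_{p∈P(r)} λ_{s,r→p}(z), is a jointly convex function of (w, λ) on all of ℝ^K × (message space). -/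

import Mathlib

namespace Stmt17

variable {V L S K : Type*}

section Aux
variable {X : Type*} [AddCommGroup X] [Module ℝ X]

lemma convexOn_sum_univ {ι : Type*} (t : Finset ι) (f : ι → X → ℝ)
    (h : ∀ i ∈ t, ConvexOn ℝ Set.univ (f i)) :
    ConvexOn ℝ Set.univ (fun x => ∑ i ∈ t, f i x) := by
  classical
  induction t using Finset.induction_on with
  | empty => simpa using convexOn_const (0 : ℝ) convex_univ
  | insert _ _ hx ih =>
    simp only [Finset.sum_insert hx]
    exact (h _ (Finset.mem_insert_self _ _)).add (ih fun i hi => h i (Finset.mem_insert_of_mem hi))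

lemma convexOn_logsumexp {ι : Type*} [Fintype ι] [Nonempty ι] (f : ι → X → ℝ)
    (haff : ∀ (a b : ℝ) (x y : X), a + b = 1 →
      ∀ z, f z (a • x + b • y) = a * f z x + b * f z y) :
    ConvexOn ℝ Set.univ (fun x => Real.log (∑ z, Real.exp (f z x))) := by
  refine ⟨convex_univ, fun x _ y _ a b ha hb hab => ?_⟩
  rcases eq_or_lt_of_le ha with rfl | hapos
  · have hb1 : b = 1 := by linarith
    subst hb1
    simp only [haff 0 1 x y (by norm_num)]
    simp
  rcases eq_or_lt_of_le hb with rfl | hbpos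
  · have ha1 : a = 1 := by linarith
    subst ha1
    simp only [haff 1 0 x y (by norm_num)]
    simp
  -- main case
  have ha1 : a < 1 := by linarith
  have hb1 : b < 1 := by linarith
  set A := ∑ z, Real.exp (f z x) with hA
  set B := ∑ z, Real.exp (f z y) with hB
  have hApos : 0 < A := Finset.sum_pos (fun z _ => Real.exp_pos _) Finset.univ_nonempty
  have hBpos : 0 < B := Finset.sum_pos (fun z _ => Real.exp_pos _) Finset.univ_nonempty
  have hconj : (1/a).HolderConjugate (1/b) := by
    constructor
    · rw [one_div, inv_inv, one_div, inv_inv, inv_one]; exact hab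
    · positivity
    · positivity
  have hhold := Real.inner_le_Lp_mul_Lq (Finset.univ (α := ι))
    (fun z => Real.exp (f z x) ^ a) (fun z => Real.exp (f z y) ^ b) hconj
  have key : ∑ z, Real.exp (f z (a • x + b • y)) ≤ A ^ a * B ^ b := by
    have h1 : ∀ z, Real.exp (f z (a • x + b • y))
        = Real.exp (f z x) ^ a * Real.exp (f z y) ^ b := by
      intro z
      rw [haff a b x y hab z, Real.exp_add, ← Real.exp_mul, ← Real.exp_mul,
        mul_comm a, mul_comm b]
    simp only [h1]
    refine le_trans hhold ?_
    have e1 : ∀ z : ι, |Real.exp (f z x) ^ a| ^ (1/a) = Real.exp (f z x) := by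
      intro z
      rw [abs_of_nonneg (Real.rpow_nonneg (Real.exp_pos _).le _),
        ← Real.rpow_mul (Real.exp_pos _).le, mul_one_div_cancel hapos.ne', Real.rpow_one]
    have e2 : ∀ z : ι, |Real.exp (f z y) ^ b| ^ (1/b) = Real.exp (f z y) := by
      intro z
      rw [abs_of_nonneg (Real.rpow_nonneg (Real.exp_pos _).le _),
        ← Real.rpow_mul (Real.exp_pos _).le, mul_one_div_cancel hbpos.ne', Real.rpow_one]
    refine le_of_eq ?_
    simp only [e1, e2, one_div_one_div, hA, hB]
  calc Real.log (∑ z, Real.exp (f z (a • x + b • y)))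
      ≤ Real.log (A ^ a * B ^ b) :=
        Real.log_le_log (Finset.sum_pos (fun z _ => Real.exp_pos _) Finset.univ_nonempty) key
    _ = a * Real.log A + b * Real.log B := by
        rw [Real.log_mul (Real.rpow_pos_of_pos hApos _).ne' (Real.rpow_pos_of_pos hBpos _).ne',
          Real.log_rpow hApos, Real.log_rpow hBpos]

end Aux

/-- Restriction of a partial label `z : ↥r → L` to a subregion `c ⊆ r`
(arbitrary when `c ⊄ r`). -/
noncomputable def res [DecidableEq V] [Nonempty L] (c r : Finset V) (z : ↥r → L) : ↥c → L :=
  if h : c ⊆ r then fun i => z ⟨i.1, h i.2⟩ else fun _ => Classical.arbitrary L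

/-- Parents of a region `r` in the region graph `E`. -/
def parents [DecidableEq V] (E : Finset (Finset V × Finset V)) (r : Finset V) :
    Finset (Finset V) :=
  (E.filter (fun e => e.1 = r)).image Prod.snd

/-- Children of a region `r` in the region graph `E`. -/
def children [DecidableEq V] (E : Finset (Finset V × Finset V)) (r : Finset V) :
    Finset (Finset V) :=
  (E.filter (fun e => e.2 = r)).image Prod.fst

variable [DecidableEq V] [Fintype L] [Nonempty L] [Fintype K]

/-- The potential `θ_{s,r}(z;w) = ℓ_{s,r}(z) + ∑_k w_k φ_{k,r}(s,z)`. -/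
noncomputable def pot (ℓ : S → (r : Finset V) → (↥r → L) → ℝ)
    (φ : K → S → (r : Finset V) → (↥r → L) → ℝ) (w : K → ℝ)
    (s : S) (r : Finset V) (z : ↥r → L) : ℝ :=
  ℓ s r z + ∑ k, w k * φ k s r z

/-- The reparametrized potential `θ_{s,r}^λ(z;w)`. -/
noncomputable def repot (ℓ : S → (r : Finset V) → (↥r → L) → ℝ)
    (φ : K → S → (r : Finset V) → (↥r → L) → ℝ)
    (E : Finset (Finset V × Finset V)) (w : K → ℝ)
    (lam : S → (r p : Finset V) → (↥r → L) → ℝ)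
    (s : S) (r : Finset V) (z : ↥r → L) : ℝ :=
  pot ℓ φ w s r z + (∑ c ∈ children E r, lam s c r (res c r z))
    - ∑ p ∈ parents E r, lam s r p z

/-- The low-dimensional structured prediction objective `J(w,λ)`. -/
noncomputable def J [Fintype S] (ℓ : S → (r : Finset V) → (↥r → L) → ℝ)
    (ytrain : S → V → L)
    (φ : K → S → (r : Finset V) → (↥r → L) → ℝ)
    (E : Finset (Finset V × Finset V)) (𝓡 : Finset (Finset V)) (ε C : ℝ)
    (w : K → ℝ) (lam : S → (r p : Finset V) → (↥r → L) → ℝ) : ℝ :=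
  (∑ s, ∑ r ∈ 𝓡,
      (ε * Real.log (∑ z : ↥r → L, Real.exp (repot ℓ φ E w lam s r z / ε))
        - repot ℓ φ E w lam s r (fun i => ytrain s i)))
    + (C / 2) * ∑ k, (w k) ^ 2


lemma repot_comb (ℓ : S → (r : Finset V) → (↥r → L) → ℝ)
    (φ : K → S → (r : Finset V) → (↥r → L) → ℝ)
    (E : Finset (Finset V × Finset V)) (a b : ℝ) (hab : a + b = 1)
    (x y : (K → ℝ) × (S → (r p : Finset V) → (↥r → L) → ℝ))
    (s : S) (r : Finset V) (z : ↥r → L) :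
    repot ℓ φ E (a • x + b • y).1 (a • x + b • y).2 s r z
      = a * repot ℓ φ E x.1 x.2 s r z + b * repot ℓ φ E y.1 y.2 s r z := by
  simp only [repot, pot, Prod.fst_add, Prod.snd_add, Prod.smul_fst, Prod.smul_snd,
    Pi.add_apply, Pi.smul_apply, smul_eq_mul, add_mul, mul_assoc, Finset.sum_add_distrib,
    ← Finset.mul_sum]
  ring_nf
  linear_combination (-ℓ s r z) * hab

/-- The low-dimensional structured prediction objective `J(w,λ)` is a
jointly convex function of `(w, λ)` on all of `ℝ^K ×` (message space). -/
theorem J_convexOn [Fintype V] [Nonempty V] [Fintype S] [Nonempty S]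
    (𝓡 : Finset (Finset V))
    (E : Finset (Finset V × Finset V))
    (hE : ∀ e ∈ E, e.1 ∈ 𝓡 ∧ e.2 ∈ 𝓡 ∧ e.1 ⊂ e.2)
    (ε C : ℝ) (hε : 0 < ε) (hC : 0 ≤ C)
    (ℓ : S → (r : Finset V) → (↥r → L) → ℝ)
    (ytrain : S → V → L)
    (φ : K → S → (r : Finset V) → (↥r → L) → ℝ) :
    ConvexOn ℝ Set.univ
      (fun wl : (K → ℝ) × (S → (r p : Finset V) → (↥r → L) → ℝ) =>
        J ℓ ytrain φ E 𝓡 ε C wl.1 wl.2) := by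
  classical
  simp only [J, sub_eq_add_neg]
  refine ConvexOn.add ?_ ?_
  · apply convexOn_sum_univ
    intro s _
    apply convexOn_sum_univ
    intro r _
    refine ConvexOn.add ?_ ?_
    · have haff : ∀ (a b : ℝ) (x y : (K → ℝ) × (S → (r p : Finset V) → (↥r → L) → ℝ)),
          a + b = 1 → ∀ z : ↥r → L,
          repot ℓ φ E (a • x + b • y).1 (a • x + b • y).2 s r z / ε
            = a * (repot ℓ φ E x.1 x.2 s r z / ε) + b * (repot ℓ φ E y.1 y.2 s r z / ε) := by
        intro a b x y hab z
        rw [repot_comb ℓ φ E a b hab x y s r z]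
        ring
      have h := convexOn_logsumexp
        (f := fun (z : ↥r → L) (wl : (K → ℝ) × (S → (r p : Finset V) → (↥r → L) → ℝ)) =>
          repot ℓ φ E wl.1 wl.2 s r z / ε) haff
      have h2 := h.smul hε.le
      simpa [smul_eq_mul] using h2
    · refine ⟨convex_univ, fun x _ y _ a b ha hb hab => le_of_eq ?_⟩
      simp only [smul_eq_mul, repot_comb ℓ φ E a b hab x y s r]
      ring
  · have hq : ConvexOn ℝ Set.univ
        (fun wl : (K → ℝ) × (S → (r p : Finset V) → (↥r → L) → ℝ) => ∑ k, (wl.1 k) ^ 2) := by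
      apply convexOn_sum_univ
      intro k _
      have := (Even.convexOn_pow (even_two (α := ℕ))).comp_linearMap
        ((LinearMap.proj k).comp (LinearMap.fst ℝ (K → ℝ) (S → (r p : Finset V) → (↥r → L) → ℝ)))
      exact this
    have h2 := hq.smul (by positivity : (0:ℝ) ≤ C / 2)
    simpa [smul_eq_mul] using h2

end Stmt17
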